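/- arXiv:1302.7309 — 4 statements merged into one kernel-verified Lean document; each statement's English description precedes it below -/
import Mathlib

section
/- Kummer's transformation: M(a,b,z) = e^z · M(b−a, b, −z) for all complex z and parameters a, b with b not a nonpositive integer. -/
open Finset

/-- The Pochhammer symbol (rising factorial) for complex arguments. -/
noncomputable def risingC (a : ℂ) (n : ℕ) : ℂ := ∏ i ∈ Finset.range n, (a + i)

/-- Kummer's confluent hypergeometric function of the first kind,
`M(a,b,z) = Σ_{n≥0} (a)_n/((b)_n n!) z^n`. -/
noncomputable def kummerM (a b z : ℂ) : ℂ :=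
  ∑' n : ℕ, risingC a n / (risingC b n * n.factorial) * z ^ n

lemma kummer_key (a : ℂ) (n : ℕ) : ∀ b : ℂ,
    ∑ k ∈ range (n+1), (n.choose k : ℂ) *
      ((∏ i ∈ range k, (a - b - i)) * (∏ j ∈ Finset.Ico k n, (b + j)))
      = ∏ j ∈ range n, (a + j) := by
  induction n with
  | zero => simp
  | succ n ih =>
    intro b
    have split : ∀ h : ℕ → ℂ, ∑ k ∈ range (n+2), ((n+1).choose k : ℂ) * h k
        = ∑ k ∈ range (n+1), (n.choose k : ℂ) * h k
          + ∑ k ∈ range (n+1), (n.choose k : ℂ) * h (k+1) := by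
      intro h
      rw [Finset.sum_range_succ' (fun k => ((n+1).choose k : ℂ) * h k) (n+1)]
      simp only [Nat.choose_succ_succ, Nat.cast_add, add_mul, Nat.choose_zero_right,
        Nat.cast_one, one_mul]
      rw [Finset.sum_add_distrib]
      have h2 : ∑ k ∈ range (n+1), ((n.choose (k+1) : ℕ) : ℂ) * h (k+1) + h 0
          = ∑ k ∈ range (n+1), (n.choose k : ℂ) * h k := by
        have := Finset.sum_range_succ' (fun k => ((n.choose k : ℕ) : ℂ) * h k) (n+1)
        simp only [Nat.choose_zero_right, Nat.cast_one, one_mul] at this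
        rw [← this, Finset.sum_range_succ, Nat.choose_succ_self]
        simp
      linear_combination h2
    rw [split]
    have e1 : ∑ k ∈ range (n+1), (n.choose k : ℂ) *
        ((∏ i ∈ range k, (a - b - i)) * (∏ j ∈ Finset.Ico k (n+1), (b + j)))
        = (∏ j ∈ range n, (a + j)) * (b + n) := by
      rw [← ih b, Finset.sum_mul]
      refine Finset.sum_congr rfl fun k hk => ?_
      rw [Finset.prod_Ico_succ_top (Nat.lt_succ_iff.mp (Finset.mem_range.mp hk))]
      ring
    have e2 : ∑ k ∈ range (n+1), (n.choose k : ℂ) *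
        ((∏ i ∈ range (k+1), (a - b - i)) * (∏ j ∈ Finset.Ico (k+1) (n+1), (b + j)))
        = (a - b) * (∏ j ∈ range n, (a + j)) := by
      rw [← ih (b+1), Finset.mul_sum]
      refine Finset.sum_congr rfl fun k hk => ?_
      have hF : ∏ i ∈ range (k+1), (a - b - i)
          = (∏ i ∈ range k, (a - (b+1) - i)) * (a - b) := by
        rw [Finset.prod_range_succ' (fun i => (a - b - i)) k]
        refine congrArg₂ _ (Finset.prod_congr rfl fun i _ => by push_cast; ring) (by simp)
      have hG : ∏ j ∈ Finset.Ico (k+1) (n+1), (b + j)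
          = ∏ j ∈ Finset.Ico k n, ((b+1) + j) := by
        rw [← Finset.prod_Ico_add' (fun x : ℕ => (b + x : ℂ)) k n 1]
        refine Finset.prod_congr rfl fun j _ => by push_cast; ring
      rw [hF, hG]; ring
    rw [e1, e2, Finset.prod_range_succ]
    ring

lemma risingC_ne_zero {b : ℂ} (hb : ∀ n : ℕ, b ≠ -(n : ℂ)) (n : ℕ) : risingC b n ≠ 0 := by
  refine Finset.prod_ne_zero_iff.mpr fun i _ => ?_
  intro h
  exact hb i (by linear_combination h)

lemma kummer_coeff (a b : ℂ) (hb : ∀ n : ℕ, b ≠ -(n : ℂ)) (n : ℕ) :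
    ∑ k ∈ range (n+1), (-1:ℂ)^k * risingC (b-a) k /
        (risingC b k * k.factorial * (n-k).factorial)
      = risingC a n / (risingC b n * n.factorial) := by
  have key := kummer_key a n b
  rw [risingC, ← key, Finset.sum_div]
  refine Finset.sum_congr rfl fun k hk => ?_
  have hkn : k ≤ n := Nat.lt_succ_iff.mp (Finset.mem_range.mp hk)
  have hsplit : risingC b n = risingC b k * ∏ j ∈ Finset.Ico k n, (b + j) := by
    rw [risingC, risingC, ← Nat.Ico_zero_eq_range]
    exact by have h := Finset.prod_Ico_consecutive (fun j : ℕ => b + (j:ℂ)) (Nat.zero_le k) hkn; rw [Nat.Ico_zero_eq_range (a := k)] at h; exact h.symm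
  have hF : (∏ i ∈ range k, (a - b - (i:ℂ))) = (-1:ℂ)^k * risingC (b-a) k := by
    calc (∏ i ∈ range k, (a - b - (i:ℂ)))
        = ∏ i ∈ range k, ((-1) * ((b-a) + (i:ℂ))) :=
          Finset.prod_congr rfl fun i _ => by ring
      _ = (-1:ℂ)^k * risingC (b-a) k := by
          rw [Finset.prod_mul_distrib, Finset.prod_const, Finset.card_range, risingC]
  have hfac : (n.factorial : ℂ) = (n.choose k : ℂ) * k.factorial * (n-k).factorial := by
    rw [← Nat.cast_mul, ← Nat.cast_mul, Nat.choose_mul_factorial_mul_factorial hkn]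
  have h1 : risingC b k ≠ 0 := risingC_ne_zero hb k
  have h2 : (∏ j ∈ Finset.Ico k n, (b + (j:ℂ))) ≠ 0 := by
    refine Finset.prod_ne_zero_iff.mpr fun i _ => fun h => hb i (by linear_combination h)
  have h3 : (k.factorial : ℂ) ≠ 0 := Nat.cast_ne_zero.mpr k.factorial_ne_zero
  have h4 : ((n-k).factorial : ℂ) ≠ 0 := Nat.cast_ne_zero.mpr (n-k).factorial_ne_zero
  have h5 : ((n.choose k : ℕ) : ℂ) ≠ 0 := Nat.cast_ne_zero.mpr (Nat.choose_pos hkn).ne'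
  rw [hsplit, hF, hfac]
  field_simp

lemma summable_norm_kummer (a b z : ℂ) (hb : ∀ n : ℕ, b ≠ -(n : ℂ)) :
    Summable fun n : ℕ => ‖risingC a n / (risingC b n * n.factorial) * z ^ n‖ := by
  set F : ℕ → ℂ := fun n => risingC a n / (risingC b n * n.factorial) * z ^ n with hF
  apply summable_of_ratio_norm_eventually_le (r := 1/2) (by norm_num)
  rw [Filter.eventually_atTop]
  refine ⟨⌈‖a‖ + 2*‖b‖ + 8*‖z‖⌉₊ + 1, fun n hn => ?_⟩
  have hn' : (‖a‖ + 2*‖b‖ + 8*‖z‖ : ℝ) ≤ n := by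
    calc (‖a‖ + 2*‖b‖ + 8*‖z‖ : ℝ) ≤ ⌈‖a‖ + 2*‖b‖ + 8*‖z‖⌉₊ := Nat.le_ceil _
    _ ≤ n := by exact_mod_cast Nat.le_of_succ_le hn
  have hn1 : (1:ℝ) ≤ n := by
    have : 1 ≤ n := le_trans (Nat.le_add_left 1 _) hn
    exact_mod_cast this
  have hbn : (b + (n:ℂ)) ≠ 0 := fun h => hb n (by linear_combination h)
  have hBn : risingC b n ≠ 0 := risingC_ne_zero hb n
  have hfacn : ((n.factorial : ℕ) : ℂ) ≠ 0 := Nat.cast_ne_zero.mpr n.factorial_ne_zero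
  have hsn : ((n:ℂ) + 1) ≠ 0 := by
    exact_mod_cast Nat.succ_ne_zero n
  have hq : F (n+1) = F n * ((a + n) * z / ((b + n) * ((n:ℂ) + 1))) := by
    simp only [hF, risingC, Finset.prod_range_succ, Nat.factorial_succ]
    push_cast
    field_simp
    ring
  have hc : ‖(n:ℂ) + 1‖ = ((n:ℝ) + 1) := by
    calc ‖(n:ℂ) + 1‖ = ‖((n + 1 : ℕ) : ℂ)‖ := by push_cast; ring_nf
      _ = ((n:ℝ) + 1) := by rw [Complex.norm_natCast]; push_cast; ring
  have hnorm : ‖F (n+1)‖ = ‖F n‖ * (‖a + (n:ℂ)‖ * ‖z‖ / (‖b + (n:ℂ)‖ * ((n:ℝ) + 1))) := by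
    rw [hq]; simp only [norm_mul, norm_div]; rw [hc]
  have h1 : ‖a + (n:ℂ)‖ ≤ ‖a‖ + n := by
    calc ‖a + (n:ℂ)‖ ≤ ‖a‖ + ‖(n:ℂ)‖ := norm_add_le _ _
      _ = ‖a‖ + n := by rw [Complex.norm_natCast]
  have h2 : (n:ℝ) - ‖b‖ ≤ ‖b + (n:ℂ)‖ := by
    have := norm_sub_norm_le ((n:ℂ)) (-b)
    simp only [norm_neg, sub_neg_eq_add, Complex.norm_natCast] at this
    calc (n:ℝ) - ‖b‖ ≤ ‖(n:ℂ) + b‖ := this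
      _ = ‖b + (n:ℂ)‖ := by rw [add_comm]
  have hbpos : (0:ℝ) < ‖b + (n:ℂ)‖ := by
    have : 2*‖b‖ ≤ n := by linarith [norm_nonneg a, norm_nonneg z]
    nlinarith [norm_nonneg b]
  have hratio : ‖a + (n:ℂ)‖ * ‖z‖ / (‖b + (n:ℂ)‖ * ((n:ℝ) + 1)) ≤ 1/2 := by
    rw [div_le_iff₀ (by positivity)]
    have ha' : ‖a‖ ≤ n := by linarith [norm_nonneg b, norm_nonneg z]
    have hb' : 2*‖b‖ ≤ n := by linarith [norm_nonneg a, norm_nonneg z]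
    have hz' : 8*‖z‖ ≤ n := by linarith [norm_nonneg a, norm_nonneg b]
    nlinarith [norm_nonneg z, norm_nonneg (a + (n:ℂ)), h1, h2,
      mul_le_mul_of_nonneg_right h1 (norm_nonneg z),
      mul_le_mul_of_nonneg_right hz' (sub_nonneg.mpr hn1)]
  calc ‖‖F (n+1)‖‖ = ‖F (n+1)‖ := norm_norm _
    _ = ‖F n‖ * (‖a + (n:ℂ)‖ * ‖z‖ / (‖b + (n:ℂ)‖ * ((n:ℝ) + 1))) := hnorm
    _ ≤ ‖F n‖ * (1/2) := mul_le_mul_of_nonneg_left hratio (norm_nonneg _)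
    _ = 1/2 * ‖‖F n‖‖ := by rw [norm_norm]; ring

/-- Kummer's transformation: `M(a,b,z) = e^z M(b−a,b,−z)` whenever `b` is not a
nonpositive integer. -/
theorem kummer_transformation (a b z : ℂ) (hb : ∀ n : ℕ, b ≠ -(n : ℂ)) :
    kummerM a b z = Complex.exp z * kummerM (b - a) b (-z) := by
  have hexp : Complex.exp z = ∑' n : ℕ, z ^ n / n.factorial := by
    rw [Complex.exp_eq_exp_ℂ, NormedSpace.exp_eq_tsum_div]
  have hsum1 : Summable fun n : ℕ => ‖z ^ n / (n.factorial : ℂ)‖ := by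
    have : ∀ n : ℕ, ‖z ^ n / (n.factorial : ℂ)‖ = ‖z‖ ^ n / n.factorial := by
      intro n
      rw [norm_div, norm_pow, Complex.norm_natCast]
    simpa only [this] using Real.summable_pow_div_factorial ‖z‖
  have hsum2 := summable_norm_kummer (b - a) b (-z) hb
  rw [kummerM, kummerM, hexp,
    tsum_mul_tsum_eq_tsum_sum_range_of_summable_norm hsum1 hsum2]
  refine tsum_congr fun n => ?_
  rw [← Finset.sum_range_reflect]
  have : ∀ k ∈ range (n+1),
      z ^ (n + 1 - 1 - k) / ((n + 1 - 1 - k).factorial : ℂ) *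
        (risingC (b-a) (n - (n + 1 - 1 - k)) /
          (risingC b (n - (n + 1 - 1 - k)) * (n - (n + 1 - 1 - k)).factorial) *
            (-z) ^ (n - (n + 1 - 1 - k)))
      = ((-1:ℂ)^k * risingC (b-a) k /
          (risingC b k * k.factorial * (n-k).factorial)) * z ^ n := by
    intro k hk
    have hkn : k ≤ n := Nat.lt_succ_iff.mp (Finset.mem_range.mp hk)
    have e1 : n + 1 - 1 - k = n - k := by omega
    have e2 : n - (n - k) = k := Nat.sub_sub_self hkn
    rw [e1, e2]
    have hz : z ^ (n - k) * z ^ k = z ^ n := by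
      rw [← pow_add, Nat.sub_add_cancel hkn]
    rw [← hz, neg_pow]
    ring
  rw [Finset.sum_congr rfl this, ← Finset.sum_mul, kummer_coeff a b hb n]
end

section
/- Euler integral representation of Kummer's function: if Re(b) > Re(a) > 0, then M(a,b,z) = (Γ(b)/(Γ(a)Γ(b−a))) ∫₀¹ e^{zu} u^{a−1} (1−u)^{b−a−1} du. -/
open MeasureTheory Complex Set

lemma Gamma_add_nat_eq_risingC (a : ℂ) (ha : 0 < a.re) (n : ℕ) :
    Complex.Gamma (a + n) = Complex.Gamma a * risingC a n := by
  induction n with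
  | zero => simp [risingC]
  | succ n ih =>
    have hre : 0 < (a + n).re := by
      simp only [Complex.add_re, Complex.natCast_re]
      positivity
    have hne : (a : ℂ) + n ≠ 0 := fun h => by simp [h] at hre
    have hstep : (a + ((n : ℕ) + 1 : ℕ) : ℂ) = (a + n) + 1 := by push_cast; ring
    rw [hstep, Complex.Gamma_add_one _ hne, ih]
    simp only [risingC, Finset.prod_range_succ]
    ring

lemma risingC_ne_zero_s4 (a : ℂ) (ha : 0 < a.re) (n : ℕ) : risingC a n ≠ 0 := by
  rw [risingC]
  refine Finset.prod_ne_zero_iff.mpr fun i _ => ?_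
  intro h
  have hre : 0 < (a + i).re := by
    simp only [Complex.add_re, Complex.natCast_re]; positivity
  simp [h] at hre

/-- Euler integral representation: if `Re(b) > Re(a) > 0`, then
`M(a,b,z) = (Γ(b)/(Γ(a)Γ(b−a))) ∫₀¹ e^{zu} u^{a−1} (1−u)^{b−a−1} du`. -/
theorem kummer_euler_integral (a b z : ℂ) (ha : 0 < a.re) (hab : a.re < b.re) :
    kummerM a b z = Complex.Gamma b / (Complex.Gamma a * Complex.Gamma (b - a)) *
      ∫ u in (0 : ℝ)..1, Complex.exp (z * u) * (u : ℂ) ^ (a - 1) * ((1 : ℂ) - u) ^ (b - a - 1) := by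
  have hc : 0 < (b - a).re := by simp only [Complex.sub_re]; linarith
  have hb : 0 < b.re := lt_trans ha hab
  have han : ∀ n : ℕ, 0 < (a + n).re := fun n => by
    simp only [Complex.add_re, Complex.natCast_re]; positivity
  have hbn : ∀ n : ℕ, 0 < (b + n).re := fun n => by
    simp only [Complex.add_re, Complex.natCast_re]; positivity
  -- value of each beta integral
  have hbeta : ∀ n : ℕ, Complex.betaIntegral (a + n) (b - a) =
      Complex.Gamma (a + n) * Complex.Gamma (b - a) / Complex.Gamma (b + n) := by
    intro n
    have h := Complex.Gamma_mul_Gamma_eq_betaIntegral (han n) hc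
    have hadd : a + n + (b - a) = b + n := by ring
    rw [hadd] at h
    rw [h, mul_div_cancel_left₀ _ (Complex.Gamma_ne_zero_of_re_pos (hbn n))]
  -- the summand functions
  set F : ℕ → ℝ → ℂ := fun n u =>
    z ^ n / n.factorial * ((u : ℂ) ^ (a + n - 1) * ((1 : ℂ) - u) ^ (b - a - 1)) with hF
  have hF_int : ∀ n : ℕ, IntegrableOn (F n) (Ioc (0 : ℝ) 1) := by
    intro n
    exact ((intervalIntegrable_iff_integrableOn_Ioc_of_le zero_le_one).mp
      (Complex.betaIntegral_convergent (han n) hc)).const_mul _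
  have hG_int : IntegrableOn (fun u : ℝ => (u : ℂ) ^ (a - 1) * ((1 : ℂ) - u) ^ (b - a - 1))
      (Ioc (0 : ℝ) 1) :=
    (intervalIntegrable_iff_integrableOn_Ioc_of_le zero_le_one).mp
      (Complex.betaIntegral_convergent ha hc)
  set C : ℝ := ∫ u in Ioc (0 : ℝ) 1, ‖(u : ℂ) ^ (a - 1) * ((1 : ℂ) - u) ^ (b - a - 1)‖ with hCdef
  -- norm bound
  have hbound : ∀ n : ℕ, (∫ u in Ioc (0 : ℝ) 1, ‖F n u‖) ≤ ‖z‖ ^ n / n.factorial * C := by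
    intro n
    have hae : ∀ᵐ u ∂(volume.restrict (Ioc (0 : ℝ) 1)), ‖F n u‖ ≤
        ‖z‖ ^ n / n.factorial * ‖(u : ℂ) ^ (a - 1) * ((1 : ℂ) - u) ^ (b - a - 1)‖ := by
      rw [ae_restrict_iff' measurableSet_Ioc]
      refine Filter.Eventually.of_forall fun u hu => ?_
      have hu0 : (0 : ℝ) < u := hu.1
      have h1 : ‖(u : ℂ) ^ (a + n - 1)‖ ≤ ‖(u : ℂ) ^ (a - 1)‖ := by
        rw [Complex.norm_cpow_eq_rpow_re_of_pos hu0,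
          Complex.norm_cpow_eq_rpow_re_of_pos hu0]
        apply Real.rpow_le_rpow_of_exponent_ge hu0 hu.2
        simp only [Complex.sub_re, Complex.add_re, Complex.natCast_re, Complex.one_re]
        linarith [Nat.cast_nonneg (α := ℝ) n]
      have hz : ‖z ^ n / (n.factorial : ℂ)‖ = ‖z‖ ^ n / n.factorial := by
        rw [norm_div, norm_pow]
        norm_num
      calc ‖F n u‖ = ‖z‖ ^ n / n.factorial *
            (‖(u : ℂ) ^ (a + n - 1)‖ * ‖((1 : ℂ) - u) ^ (b - a - 1)‖) := by
            rw [hF]; simp only [norm_mul, hz]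
        _ ≤ ‖z‖ ^ n / n.factorial *
            (‖(u : ℂ) ^ (a - 1)‖ * ‖((1 : ℂ) - u) ^ (b - a - 1)‖) := by
            have h0 : (0 : ℝ) ≤ ‖z‖ ^ n / n.factorial := by positivity
            exact mul_le_mul_of_nonneg_left
              (mul_le_mul_of_nonneg_right h1 (norm_nonneg _)) h0
        _ = ‖z‖ ^ n / n.factorial * ‖(u : ℂ) ^ (a - 1) * ((1 : ℂ) - u) ^ (b - a - 1)‖ := by
            rw [norm_mul]
    calc (∫ u in Ioc (0 : ℝ) 1, ‖F n u‖)
        ≤ ∫ u in Ioc (0 : ℝ) 1,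
            ‖z‖ ^ n / n.factorial * ‖(u : ℂ) ^ (a - 1) * ((1 : ℂ) - u) ^ (b - a - 1)‖ :=
          integral_mono_ae (hF_int n).norm (hG_int.norm.const_mul _) hae
      _ = ‖z‖ ^ n / n.factorial * C := by rw [integral_const_mul]
  have hsummable : Summable fun n : ℕ => ∫ u in Ioc (0 : ℝ) 1, ‖F n u‖ := by
    refine Summable.of_nonneg_of_le (fun n => integral_nonneg fun u => norm_nonneg _)
      hbound ?_
    exact (Real.summable_pow_div_factorial ‖z‖).mul_right C
  -- interchange sum and integral
  have key : ∑' n : ℕ, (∫ u in Ioc (0 : ℝ) 1, F n u) =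
      ∫ u in Ioc (0 : ℝ) 1, ∑' n : ℕ, F n u :=
    integral_tsum_of_summable_integral_norm hF_int hsummable
  -- each integral is a beta integral
  have hFval : ∀ n : ℕ, (∫ u in Ioc (0 : ℝ) 1, F n u) =
      z ^ n / n.factorial * Complex.betaIntegral (a + n) (b - a) := by
    intro n
    rw [hF]
    simp only
    rw [integral_const_mul, Complex.betaIntegral,
      intervalIntegral.integral_of_le zero_le_one]
  -- pointwise sum is the exponential integrand
  have hsum : ∀ u ∈ Ioc (0 : ℝ) 1, (∑' n : ℕ, F n u) =
      Complex.exp (z * u) * (u : ℂ) ^ (a - 1) * ((1 : ℂ) - u) ^ (b - a - 1) := by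
    intro u hu
    have hu0 : ((u : ℂ)) ≠ 0 := by exact_mod_cast hu.1.ne'
    have hcp : ∀ n : ℕ, (u : ℂ) ^ (a + n - 1) = (u : ℂ) ^ (n : ℕ) * (u : ℂ) ^ (a - 1) := by
      intro n
      rw [show a + (n : ℕ) - 1 = (n : ℂ) + (a - 1) by ring, Complex.cpow_add _ _ hu0,
        Complex.cpow_natCast]
    calc (∑' n : ℕ, F n u)
        = ∑' n : ℕ, (z * u) ^ n / n.factorial *
            ((u : ℂ) ^ (a - 1) * ((1 : ℂ) - u) ^ (b - a - 1)) := by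
          refine tsum_congr fun n => ?_
          rw [hF]; simp only
          rw [hcp n, mul_pow]; ring
      _ = (∑' n : ℕ, (z * u) ^ n / n.factorial) *
            ((u : ℂ) ^ (a - 1) * ((1 : ℂ) - u) ^ (b - a - 1)) := tsum_mul_right
      _ = Complex.exp (z * u) * (u : ℂ) ^ (a - 1) * ((1 : ℂ) - u) ^ (b - a - 1) := by
          rw [Complex.exp_eq_exp_ℂ, NormedSpace.exp_eq_tsum_div]
          ring
  -- rewrite RHS integral
  have hint : (∫ u in (0 : ℝ)..1,
        Complex.exp (z * u) * (u : ℂ) ^ (a - 1) * ((1 : ℂ) - u) ^ (b - a - 1)) =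
      ∑' n : ℕ, z ^ n / n.factorial * Complex.betaIntegral (a + n) (b - a) := by
    rw [intervalIntegral.integral_of_le zero_le_one, ← setIntegral_congr_fun measurableSet_Ioc hsum,
      ← key]
    exact tsum_congr hFval
  rw [hint, ← tsum_mul_left]
  refine tsum_congr fun n => ?_
  rw [hbeta n, Gamma_add_nat_eq_risingC a ha n, Gamma_add_nat_eq_risingC b hb n]
  have hGa := Complex.Gamma_ne_zero_of_re_pos ha
  have hGb := Complex.Gamma_ne_zero_of_re_pos hb
  have hGc := Complex.Gamma_ne_zero_of_re_pos hc
  have hRb := risingC_ne_zero_s4 b hb n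
  have hfac : ((n.factorial : ℂ)) ≠ 0 := Nat.cast_ne_zero.mpr n.factorial_ne_zero
  field_simp
end

section
/- Euler integral representation of the Gauss hypergeometric function: for |z| < 1 and Re(c) > Re(b) > 0, ₂F₁(a,b;c;z) = (Γ(c)/(Γ(b)Γ(c−b))) ∫₀¹ t^{b−1}(1−t)^{c−b−1}(1−zt)^{−a} dt. -/
open Filter Metric MeasureTheory Set

/-- The Gauss hypergeometric function
`₂F₁(a,b;c;z) = Σ_{k≥0} (a)_k (b)_k/((c)_k k!) z^k`. -/
noncomputable def gaussHyper (a b c z : ℂ) : ℂ :=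
  ∑' k : ℕ, risingC a k * risingC b k / (risingC c k * k.factorial) * z ^ k

noncomputable def binCoeff (a : ℂ) (k : ℕ) : ℂ := risingC a k / (k.factorial : ℂ)

lemma risingC_zero (a : ℂ) : risingC a 0 = 1 := by simp [risingC]

lemma risingC_succ (a : ℂ) (n : ℕ) : risingC a (n + 1) = risingC a n * (a + n) :=
  Finset.prod_range_succ _ _

/-- coefficient `(a)_k / k!` -/
lemma binCoeff_zero (a : ℂ) : binCoeff a 0 = 1 := by simp [binCoeff, risingC_zero]

lemma binCoeff_succ (a : ℂ) (k : ℕ) :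
    binCoeff a (k + 1) * (k + 1) = binCoeff a k * (a + k) := by
  have hk : ((k + 1 : ℕ) : ℂ) ≠ 0 := Nat.cast_ne_zero.mpr (Nat.succ_ne_zero k)
  simp only [binCoeff, risingC_succ, Nat.factorial_succ, Nat.cast_mul, Nat.cast_add,
    Nat.cast_one]
  rw [mul_comm ((k:ℂ)+1) (k.factorial : ℂ), ← div_div, div_mul_eq_mul_div,
    mul_div_assoc, div_self (show ((k:ℂ)+1) ≠ 0 by exact_mod_cast (Nat.cast_ne_zero (R:=ℂ)).mpr (Nat.succ_ne_zero k)), mul_one, div_mul_eq_mul_div]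

lemma norm_binCoeff_succ (a : ℂ) (k : ℕ) :
    ‖binCoeff a (k + 1)‖ * (k + 1) = ‖binCoeff a k‖ * ‖a + k‖ := by
  have h := binCoeff_succ a k
  have : ‖binCoeff a (k + 1) * ((k : ℂ) + 1)‖ = ‖binCoeff a k * (a + k)‖ := by rw [h]
  have hn : ‖((k : ℂ) + 1)‖ = (k : ℝ) + 1 := by
    rw [show ((k : ℂ) + 1) = ((k + 1 : ℕ) : ℂ) by push_cast; ring, Complex.norm_natCast]
    push_cast; ring
  rw [norm_mul, norm_mul, hn] at this
  exact this

lemma eventually_aux (a : ℂ) {x r : ℝ} (hx : 0 ≤ x) (hxr : x < r) :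
    ∀ᶠ k : ℕ in Filter.atTop, ‖a + k‖ * x ≤ r * (k + 1) := by
  refine Filter.eventually_atTop.2 ⟨⌈‖a‖ * x / (r - x)⌉₊, fun k hk => ?_⟩
  have hrx : 0 < r - x := by linarith
  have h1 : ‖a‖ * x / (r - x) ≤ (k : ℝ) := (Nat.ceil_le.1 hk).trans (by exact_mod_cast le_refl _)
  have h2 : ‖a‖ * x ≤ (k : ℝ) * (r - x) := by
    rw [div_le_iff₀ hrx] at h1; linarith
  have h3 : ‖a + (k : ℂ)‖ ≤ ‖a‖ + k := by
    calc ‖a + (k : ℂ)‖ ≤ ‖a‖ + ‖(k : ℂ)‖ := norm_add_le _ _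
    _ = ‖a‖ + k := by norm_num
  have hk0 : (0 : ℝ) ≤ k := Nat.cast_nonneg k
  have hr0 : 0 < r := lt_of_le_of_lt hx hxr
  calc ‖a + (k : ℂ)‖ * x ≤ (‖a‖ + k) * x := by
        exact mul_le_mul_of_nonneg_right h3 hx
    _ ≤ r * (k + 1) := by nlinarith

lemma summable_norm_binCoeff (a : ℂ) {x : ℝ} (hx : 0 ≤ x) (hx1 : x < 1) :
    Summable (fun k : ℕ => ‖binCoeff a k‖ * x ^ k) := by
  set r := (1 + x) / 2 with hr
  have hxr : x < r := by rw [hr]; linarith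
  have hr1 : r < 1 := by rw [hr]; linarith
  refine summable_of_ratio_norm_eventually_le hr1 ?_
  filter_upwards [eventually_aux a hx hxr] with k hk
  have e1 : ‖binCoeff a (k+1)‖ * (k+1) = ‖binCoeff a k‖ * ‖a + k‖ := norm_binCoeff_succ a k
  have hk1 : (0:ℝ) < (k:ℝ) + 1 := by positivity
  have key : ‖binCoeff a (k+1)‖ * x ≤ r * ‖binCoeff a k‖ := by
    rw [← mul_le_mul_iff_of_pos_right hk1]
    calc ‖binCoeff a (k+1)‖ * x * ((k:ℝ)+1) = (‖binCoeff a (k+1)‖ * ((k:ℝ)+1)) * x := by ring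
      _ = ‖binCoeff a k‖ * ‖a + k‖ * x := by rw [e1]
      _ = ‖binCoeff a k‖ * (‖a + k‖ * x) := by ring
      _ ≤ ‖binCoeff a k‖ * (r * ((k:ℝ)+1)) := by
          exact mul_le_mul_of_nonneg_left hk (norm_nonneg _)
      _ = r * ‖binCoeff a k‖ * ((k:ℝ)+1) := by ring
  have hb : (0:ℝ) ≤ ‖binCoeff a k‖ * x ^ k := by positivity
  have : ‖binCoeff a (k+1)‖ * x ^ (k+1) ≤ r * (‖binCoeff a k‖ * x ^ k) := by
    calc ‖binCoeff a (k+1)‖ * x ^ (k+1) = (‖binCoeff a (k+1)‖ * x) * x ^ k := by ring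
      _ ≤ (r * ‖binCoeff a k‖) * x ^ k := by
          exact mul_le_mul_of_nonneg_right key (by positivity)
      _ = r * (‖binCoeff a k‖ * x ^ k) := by ring
  calc ‖‖binCoeff a (k+1)‖ * x ^ (k+1)‖ = ‖binCoeff a (k+1)‖ * x ^ (k+1) :=
      Real.norm_of_nonneg (by positivity)
    _ ≤ r * (‖binCoeff a k‖ * x ^ k) := this
    _ = r * ‖‖binCoeff a k‖ * x ^ k‖ := by rw [Real.norm_of_nonneg hb]

lemma summable_norm_binCoeff_mul (a : ℂ) {x : ℝ} (hx : 0 ≤ x) (hx1 : x < 1) :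
    Summable (fun k : ℕ => ‖binCoeff a k‖ * ‖a + k‖ * x ^ k) := by
  set r := (1 + x) / 2 with hr
  have hxr : x < r := by rw [hr]; linarith
  have hr1 : r < 1 := by rw [hr]; linarith
  refine summable_of_ratio_norm_eventually_le hr1 ?_
  have haux : ∀ᶠ k : ℕ in atTop, ‖(a+1) + k‖ * x ≤ r * (k + 1) := eventually_aux (a+1) hx hxr
  filter_upwards [haux] with k hk
  have hk' : ‖a + (k+1 : ℕ)‖ * x ≤ r * (k + 1) := by
    have : ((a+1) + (k:ℂ)) = a + ((k+1 : ℕ) : ℂ) := by push_cast; ring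
    rwa [this] at hk
  have e1 : ‖binCoeff a (k+1)‖ * (k+1) = ‖binCoeff a k‖ * ‖a + k‖ := norm_binCoeff_succ a k
  have hk1 : (0:ℝ) < (k:ℝ) + 1 := by positivity
  have key : ‖binCoeff a (k+1)‖ * ‖a + (k+1:ℕ)‖ * x ≤ r * (‖binCoeff a k‖ * ‖a + k‖) := by
    rw [← mul_le_mul_iff_of_pos_right hk1]
    calc ‖binCoeff a (k+1)‖ * ‖a + (k+1:ℕ)‖ * x * ((k:ℝ)+1)
        = (‖binCoeff a (k+1)‖ * ((k:ℝ)+1)) * (‖a + (k+1:ℕ)‖ * x) := by ring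
      _ = (‖binCoeff a k‖ * ‖a + k‖) * (‖a + (k+1:ℕ)‖ * x) := by rw [e1]
      _ ≤ (‖binCoeff a k‖ * ‖a + k‖) * (r * ((k:ℝ)+1)) := by
          exact mul_le_mul_of_nonneg_left hk' (by positivity)
      _ = r * (‖binCoeff a k‖ * ‖a + k‖) * ((k:ℝ)+1) := by ring
  have : ‖binCoeff a (k+1)‖ * ‖a + (k+1:ℕ)‖ * x ^ (k+1)
      ≤ r * (‖binCoeff a k‖ * ‖a + k‖ * x ^ k) := by
    calc ‖binCoeff a (k+1)‖ * ‖a + (k+1:ℕ)‖ * x ^ (k+1)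
        = (‖binCoeff a (k+1)‖ * ‖a + (k+1:ℕ)‖ * x) * x ^ k := by ring
      _ ≤ (r * (‖binCoeff a k‖ * ‖a + k‖)) * x ^ k := by
          exact mul_le_mul_of_nonneg_right key (by positivity)
      _ = r * (‖binCoeff a k‖ * ‖a + k‖ * x ^ k) := by ring
  calc ‖‖binCoeff a (k+1)‖ * ‖a + ((k+1:ℕ):ℂ)‖ * x ^ (k+1)‖
      = ‖binCoeff a (k+1)‖ * ‖a + (k+1:ℕ)‖ * x ^ (k+1) :=
        Real.norm_of_nonneg (by positivity)
    _ ≤ r * (‖binCoeff a k‖ * ‖a + k‖ * x ^ k) := this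
    _ = r * ‖‖binCoeff a k‖ * ‖a + (k:ℂ)‖ * x ^ k‖ := by
        rw [Real.norm_of_nonneg (by positivity)]

lemma summable_binCoeff (a : ℂ) {y : ℂ} (hy : ‖y‖ < 1) :
    Summable (fun k : ℕ => binCoeff a k * y ^ k) := by
  refine Summable.of_norm_bounded (summable_norm_binCoeff a (norm_nonneg y) hy) fun k => ?_
  rw [norm_mul, norm_pow]

lemma hasSum_one_sub_cpow (a : ℂ) {w : ℂ} (hw : ‖w‖ < 1) :
    HasSum (fun k : ℕ => binCoeff a k * w ^ k) ((1 - w) ^ (-a)) := by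
  set R : ℝ := (1 + ‖w‖) / 2 with hR
  have hR0 : 0 < R := by positivity
  have hwR : ‖w‖ < R := by rw [hR]; linarith
  have hR1 : R < 1 := by rw [hR]; linarith
  set t : Set ℂ := ball (0 : ℂ) R with ht
  -- summable bound for derivatives
  set u : ℕ → ℝ := fun k => ‖binCoeff a k‖ * k * R ^ (k - 1) with hu
  have husum : Summable u := by
    rw [← summable_nat_add_iff 1]
    have heq : ∀ m : ℕ, u (m + 1) = ‖binCoeff a m‖ * ‖a + m‖ * R ^ m := by
      intro m
      rw [hu]
      simp only [Nat.add_sub_cancel, Nat.cast_add, Nat.cast_one]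
      rw [show ‖binCoeff a (m+1)‖ * ((m:ℝ)+1) * R ^ m
          = (‖binCoeff a (m+1)‖ * ((m:ℝ)+1)) * R ^ m by ring,
        norm_binCoeff_succ a m]
    rw [funext heq]
    exact summable_norm_binCoeff_mul a hR0.le hR1
  set g : ℂ → ℂ := fun y => ∑' k : ℕ, binCoeff a k * y ^ k with hgdef
  have hderiv0 : ∀ (k : ℕ) (y : ℂ),
      HasDerivAt (fun x : ℂ => binCoeff a k * x ^ k) (binCoeff a k * (k * y ^ (k - 1))) y :=
    fun k y => (hasDerivAt_pow k y).const_mul _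
  have hbound : ∀ (k : ℕ) (y : ℂ), y ∈ t → ‖binCoeff a k * (k * y ^ (k - 1))‖ ≤ u k := by
    intro k y hy
    rw [mem_ball, dist_zero_right] at hy
    rw [norm_mul, norm_mul, norm_pow, Complex.norm_natCast]
    calc ‖binCoeff a k‖ * ((k : ℝ) * ‖y‖ ^ (k-1))
        ≤ ‖binCoeff a k‖ * ((k : ℝ) * R ^ (k-1)) := by
          have := pow_le_pow_left₀ (norm_nonneg y) hy.le (k-1)
          gcongr
      _ = u k := by rw [hu]; ring
  have hg0 : Summable (fun k : ℕ => binCoeff a k * (0 : ℂ) ^ k) := by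
    refine summable_of_ne_finset_zero (s := {0}) fun k hk => ?_
    simp only [Finset.mem_singleton] at hk
    rw [zero_pow hk, mul_zero]
  have hderiv : ∀ y ∈ t, HasDerivAt g (∑' k : ℕ, binCoeff a k * (k * y ^ (k - 1))) y := by
    intro y hy
    exact hasDerivAt_tsum_of_isPreconnected husum isOpen_ball
      (convex_ball (0:ℂ) R).isPreconnected
      (fun k x _ => hderiv0 k x) hbound (mem_ball_self hR0) hg0 hy
  -- key algebraic identity
  have key : ∀ y ∈ t, (1 - y) * (∑' k : ℕ, binCoeff a k * (k * y ^ (k - 1))) = a * g y := by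
    intro y hy
    rw [mem_ball, dist_zero_right] at hy
    have hy1 : ‖y‖ < 1 := hy.trans hR1
    set D : ℂ := ∑' k : ℕ, binCoeff a k * (k * y ^ (k - 1)) with hD
    have hsD : Summable (fun k : ℕ => binCoeff a k * (k * y ^ (k - 1))) := by
      refine Summable.of_norm_bounded husum fun k => ?_
      exact hbound k y (by rwa [mem_ball, dist_zero_right])
    have hshift : Summable (fun m : ℕ => binCoeff a m * (a + m) * y ^ m) := by
      refine Summable.of_norm_bounded
        (summable_norm_binCoeff_mul a (norm_nonneg y) hy1) fun m => ?_
      rw [norm_mul, norm_mul, norm_pow]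
    have hD1 : D = ∑' m : ℕ, binCoeff a m * (a + m) * y ^ m := by
      rw [hD, Summable.tsum_eq_zero_add hsD]
      simp only [Nat.cast_zero, zero_mul, mul_zero, zero_add, Nat.add_sub_cancel]
      refine tsum_congr fun m => ?_
      have h1 : binCoeff a (m+1) * (((m+1:ℕ) : ℂ) * y ^ m)
          = (binCoeff a (m+1) * ((m : ℂ) + 1)) * y ^ m := by push_cast; ring
      rw [h1, binCoeff_succ]
    have hmulD : y * D = ∑' m : ℕ, binCoeff a m * (m : ℂ) * y ^ m := by
      rw [hD, ← tsum_mul_left]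
      refine tsum_congr fun k => ?_
      cases k with
      | zero => simp
      | succ m =>
        simp only [Nat.add_sub_cancel]
        push_cast
        ring
    have hsmul : Summable (fun m : ℕ => binCoeff a m * (m : ℂ) * y ^ m) := by
      have := hsD.mul_left y
      refine this.congr fun k => ?_
      cases k with
      | zero => simp
      | succ m =>
        simp only [Nat.add_sub_cancel]
        push_cast
        ring
    have hsg : Summable (fun k : ℕ => binCoeff a k * y ^ k) := summable_binCoeff a hy1
    calc (1 - y) * D = D - y * D := by ring
      _ = (∑' m : ℕ, binCoeff a m * (a + m) * y ^ m)
          - ∑' m : ℕ, binCoeff a m * (m : ℂ) * y ^ m := by rw [← hD1, ← hmulD]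
      _ = ∑' m : ℕ, (binCoeff a m * (a + m) * y ^ m - binCoeff a m * (m : ℂ) * y ^ m) :=
          (Summable.tsum_sub hshift hsmul).symm
      _ = ∑' m : ℕ, a * (binCoeff a m * y ^ m) := by
          refine tsum_congr fun m => ?_; ring
      _ = a * g y := by rw [tsum_mul_left]
  -- the function h is constant on the ball
  set h : ℂ → ℂ := fun y => (1 - y) ^ a * g y with hh
  have hslit : ∀ y ∈ t, (1 - y) ∈ Complex.slitPlane := by
    intro y hy
    rw [mem_ball, dist_zero_right] at hy
    refine Complex.mem_slitPlane_iff.2 (Or.inl ?_)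
    have h1 : |y.re| ≤ ‖y‖ := Complex.abs_re_le_norm y
    have h2 : ‖y‖ < 1 := hy.trans hR1
    have h3 : y.re < 1 := lt_of_le_of_lt (le_abs_self _) (lt_of_le_of_lt h1 h2)
    simp only [Complex.sub_re, Complex.one_re]
    linarith
  have hne : ∀ y ∈ t, (1 : ℂ) - y ≠ 0 := fun y hy =>
    Complex.slitPlane_ne_zero (hslit y hy)
  have hderivh : ∀ y ∈ t, HasDerivAt h 0 y := by
    intro y hy
    have hcp : HasDerivAt (fun x : ℂ => (1 - x) ^ a) (a * (1 - y) ^ (a - 1) * (-1)) y :=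
      HasDerivAt.cpow_const ((hasDerivAt_id y).const_sub 1) (hslit y hy)
    have hm := hcp.mul (hderiv y hy)
    have hzero : a * (1 - y) ^ (a - 1) * (-1) * g y
        + (1 - y) ^ a * (∑' k : ℕ, binCoeff a k * (k * y ^ (k - 1))) = 0 := by
      have hA : (1 - y) ^ a = (1 - y) ^ (a - 1) * (1 - y) := by
        conv_lhs => rw [show a = a - 1 + 1 by ring]
        rw [Complex.cpow_add _ _ (hne y hy), Complex.cpow_one]
      rw [hA]
      have hk := key y hy
      calc a * (1 - y) ^ (a - 1) * (-1) * g y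
          + (1 - y) ^ (a - 1) * (1 - y) * (∑' k : ℕ, binCoeff a k * (k * y ^ (k - 1)))
          = (1 - y) ^ (a - 1)
            * ((1 - y) * (∑' k : ℕ, binCoeff a k * (k * y ^ (k - 1))) - a * g y) := by ring
        _ = 0 := by rw [hk]; ring
    rw [← hzero]
    exact hm
  have hconst : h w = h 0 := by
    have hmemw : w ∈ t := by rwa [mem_ball, dist_zero_right]
    have hmem0 : (0 : ℂ) ∈ t := mem_ball_self hR0
    refine (convex_ball (0:ℂ) R).is_const_of_fderivWithin_eq_zero (f := h)
      (fun y hy => ((hderivh y hy).differentiableAt).differentiableWithinAt) ?_ hmemw hmem0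
    intro y hy
    rw [fderivWithin_of_isOpen isOpen_ball hy,
      ((hasDerivAt_iff_hasFDerivAt).1 (hderivh y hy)).fderiv]
    ext
    simp
  -- evaluate h 0 and conclude
  have hg00 : g 0 = 1 := by
    show ∑' k : ℕ, binCoeff a k * (0:ℂ) ^ k = 1
    rw [tsum_eq_single 0 (fun k hk => by rw [zero_pow hk, mul_zero])]
    simp [binCoeff_zero]
  have hh0 : h 0 = 1 := by
    rw [hh]
    simp only [sub_zero, Complex.one_cpow, one_mul]
    exact hg00
  have hmemw : w ∈ t := by rwa [mem_ball, dist_zero_right]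
  have hhw : (1 - w) ^ a * g w = 1 := by
    have := hconst.trans hh0
    rwa [hh] at this
  have hgw : g w = (1 - w) ^ (-a) := by
    rw [Complex.cpow_neg]
    exact (inv_eq_of_mul_eq_one_right hhw).symm
  have := (summable_binCoeff a (hw.trans_le le_rfl)).hasSum
  rwa [show ∑' k : ℕ, binCoeff a k * w ^ k = g w from rfl, hgw] at this

lemma ne_zero_of_re_pos' {s : ℂ} (hs : 0 < s.re) : s ≠ 0 := fun h => by simp [h] at hs

lemma Gamma_ne_zero_of_re_pos' {s : ℂ} (hs : 0 < s.re) : Complex.Gamma s ≠ 0 := by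
  refine Complex.Gamma_ne_zero fun m => ?_
  intro h
  rw [h] at hs
  simp only [Complex.neg_re, Complex.natCast_re] at hs
  have : (0:ℝ) ≤ m := Nat.cast_nonneg m
  linarith

lemma risingC_ne_zero_s9 {s : ℂ} (hs : 0 < s.re) (k : ℕ) : risingC s k ≠ 0 := by
  rw [risingC]
  refine Finset.prod_ne_zero_iff.2 fun i _ => ?_
  refine ne_zero_of_re_pos' ?_
  simp only [Complex.add_re, Complex.natCast_re]
  have : (0:ℝ) ≤ i := Nat.cast_nonneg i
  linarith

lemma Gamma_add_nat (b : ℂ) (hb : 0 < b.re) (k : ℕ) :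
    Complex.Gamma (b + k) = risingC b k * Complex.Gamma b := by
  induction k with
  | zero => simp [risingC_zero]
  | succ n ih =>
    have hre : 0 < (b + n).re := by
      simp only [Complex.add_re, Complex.natCast_re]
      have : (0:ℝ) ≤ n := Nat.cast_nonneg n
      linarith
    have h1 : b + (n+1 : ℕ) = (b + n) + 1 := by push_cast; ring
    rw [h1, Complex.Gamma_add_one _ (ne_zero_of_re_pos' hre), ih, risingC_succ]
    ring

/-- Euler integral representation of the Gauss hypergeometric function:
for `|z| < 1` and `Re(c) > Re(b) > 0`,
`₂F₁(a,b;c;z) = (Γ(c)/(Γ(b)Γ(c−b))) ∫₀¹ t^{b−1}(1−t)^{c−b−1}(1−zt)^{−a} dt`. -/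
theorem gaussHyper_euler_integral (a b c z : ℂ)
    (hz : ‖z‖ < 1) (hb : 0 < b.re) (hbc : b.re < c.re) :
    gaussHyper a b c z = Complex.Gamma c / (Complex.Gamma b * Complex.Gamma (c - b)) *
      ∫ t in (0 : ℝ)..1,
        (t : ℂ) ^ (b - 1) * ((1 : ℂ) - t) ^ (c - b - 1) * ((1 : ℂ) - z * t) ^ (-a) := by
  have hz' : ‖z‖ < 1 := hz
  have hcb : 0 < (c - b).re := by simp only [Complex.sub_re]; linarith
  have hc : 0 < c.re := hb.trans hbc
  set F : ℕ → ℝ → ℂ := fun k t =>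
    (t : ℂ) ^ (b - 1) * ((1 : ℂ) - t) ^ (c - b - 1) * (binCoeff a k * (z * t) ^ k) with hF
  -- pointwise rewriting on Ioc
  have hFeq : ∀ k : ℕ, ∀ t ∈ Ioc (0:ℝ) 1, F k t =
      binCoeff a k * z ^ k * ((t : ℂ) ^ (b + k - 1) * ((1 : ℂ) - t) ^ (c - b - 1)) := by
    intro k t ht
    have ht0 : (t : ℂ) ≠ 0 := by exact_mod_cast ne_of_gt ht.1
    have hpow : (t : ℂ) ^ (b - 1) * (t : ℂ) ^ k = (t : ℂ) ^ (b + k - 1) := by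
      rw [← Complex.cpow_natCast, ← Complex.cpow_add _ _ ht0]
      ring_nf
    rw [hF]
    simp only
    rw [mul_pow]
    calc (t : ℂ) ^ (b - 1) * ((1:ℂ) - t) ^ (c - b - 1) * (binCoeff a k * (z ^ k * (t:ℂ) ^ k))
        = binCoeff a k * z ^ k * (((t:ℂ) ^ (b-1) * (t:ℂ) ^ k) * ((1:ℂ) - t) ^ (c - b - 1)) := by
          ring
      _ = _ := by rw [hpow]
  -- integrability
  have hbeta : ∀ k : ℕ, IntegrableOn
      (fun t : ℝ => (t : ℂ) ^ (b + k - 1) * ((1 : ℂ) - t) ^ (c - b - 1)) (Ioc (0:ℝ) 1) := by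
    intro k
    have hre : 0 < (b + k).re := by
      simp only [Complex.add_re, Complex.natCast_re]
      have : (0:ℝ) ≤ k := Nat.cast_nonneg k
      linarith
    have := Complex.betaIntegral_convergent hre hcb
    rwa [intervalIntegrable_iff, uIoc_of_le zero_le_one] at this
  have hFint : ∀ k : ℕ, IntegrableOn (F k) (Ioc (0:ℝ) 1) := by
    intro k
    refine IntegrableOn.congr_fun ?_ (fun t ht => (hFeq k t ht).symm) measurableSet_Ioc
    exact (hbeta k).const_mul _
  -- norm bound and summability of integrals of norms
  have hg0int : IntegrableOn
      (fun t : ℝ => ‖(t : ℂ) ^ (b - 1) * ((1 : ℂ) - t) ^ (c - b - 1)‖) (Ioc (0:ℝ) 1) := by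
    have h := hbeta 0
    simp only [Nat.cast_zero, add_zero] at h
    exact h.norm
  set M : ℝ := ∫ t in Ioc (0:ℝ) 1, ‖(t : ℂ) ^ (b - 1) * ((1 : ℂ) - t) ^ (c - b - 1)‖ with hM
  have hnormbound : ∀ k : ℕ, (∫ t in Ioc (0:ℝ) 1, ‖F k t‖)
      ≤ ‖binCoeff a k‖ * ‖z‖ ^ k * M := by
    intro k
    rw [hM, ← integral_const_mul]
    refine setIntegral_mono_on ((hFint k).norm) (hg0int.const_mul _) measurableSet_Ioc ?_
    intro t ht
    rw [hF]
    simp only [norm_mul]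
    have hzt : ‖z * (t:ℂ)‖ ≤ ‖z‖ := by
      rw [norm_mul, Complex.norm_real, Real.norm_of_nonneg ht.1.le]
      nlinarith [norm_nonneg z, ht.2, ht.1.le]
    have h1 : ‖(z * (t:ℂ)) ^ k‖ ≤ ‖z‖ ^ k := by
      rw [norm_pow]
      exact pow_le_pow_left₀ (norm_nonneg _) hzt k
    calc ‖(t:ℂ) ^ (b-1)‖ * ‖((1:ℂ) - t) ^ (c-b-1)‖ * (‖binCoeff a k‖ * ‖(z * (t:ℂ)) ^ k‖)
        ≤ ‖(t:ℂ) ^ (b-1)‖ * ‖((1:ℂ) - t) ^ (c-b-1)‖ * (‖binCoeff a k‖ * ‖z‖ ^ k) := by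
          have hnn : (0:ℝ) ≤ ‖(t:ℂ) ^ (b-1)‖ * ‖((1:ℂ) - t) ^ (c-b-1)‖ := by positivity
          have := mul_le_mul_of_nonneg_left
            (mul_le_mul_of_nonneg_left h1 (norm_nonneg (binCoeff a k))) hnn
          exact this
      _ = ‖binCoeff a k‖ * ‖z‖ ^ k * (‖(t:ℂ) ^ (b-1)‖ * ‖((1:ℂ) - t) ^ (c-b-1)‖) := by
          ring
  have hsumnorm : Summable (fun k : ℕ => ∫ t in Ioc (0:ℝ) 1, ‖F k t‖) := by
    refine Summable.of_nonneg_of_le (fun k => integral_nonneg fun t => norm_nonneg _)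
      hnormbound ?_
    have := (summable_norm_binCoeff a (norm_nonneg z) hz').mul_right M
    refine this.congr fun k => ?_
    ring
  -- exchange sum and integral
  have hswap : HasSum (fun k : ℕ => ∫ t in Ioc (0:ℝ) 1, F k t)
      (∫ t in Ioc (0:ℝ) 1, ∑' k : ℕ, F k t) :=
    hasSum_integral_of_summable_integral_norm (fun k => hFint k) hsumnorm
  -- identify the pointwise sum
  have hptsum : ∀ t ∈ Ioc (0:ℝ) 1, (∑' k : ℕ, F k t) =
      (t : ℂ) ^ (b - 1) * ((1 : ℂ) - t) ^ (c - b - 1) * ((1 : ℂ) - z * t) ^ (-a) := by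
    intro t ht
    have hzt : ‖z * (t:ℂ)‖ < 1 := by
      rw [norm_mul, Complex.norm_real, Real.norm_of_nonneg ht.1.le]
      nlinarith [norm_nonneg z, ht.2, ht.1.le]
    have h := (hasSum_one_sub_cpow a hzt).mul_left
      ((t : ℂ) ^ (b - 1) * ((1 : ℂ) - t) ^ (c - b - 1))
    rw [hF]
    exact h.tsum_eq
  -- value of each integral via the Beta function
  have hval : ∀ k : ℕ, (∫ t in Ioc (0:ℝ) 1, F k t) =
      binCoeff a k * z ^ k * Complex.betaIntegral (b + k) (c - b) := by
    intro k
    rw [setIntegral_congr_fun measurableSet_Ioc (hFeq k), integral_const_mul,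
      Complex.betaIntegral, intervalIntegral.integral_of_le zero_le_one]
  -- Beta in terms of Gamma
  have hbetaval : ∀ k : ℕ, Complex.betaIntegral (b + k) (c - b)
      = Complex.Gamma (b + k) * Complex.Gamma (c - b) / Complex.Gamma (c + k) := by
    intro k
    have hkk : (0:ℝ) ≤ (k:ℝ) := Nat.cast_nonneg k
    have hre : 0 < (b + (k:ℂ)).re := by
      simp only [Complex.add_re, Complex.natCast_re]; linarith
    have hrec : 0 < (c + (k:ℂ)).re := by
      simp only [Complex.add_re, Complex.natCast_re]; linarith
    have h := Complex.Gamma_mul_Gamma_eq_betaIntegral hre hcb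
    have hsum : b + (k:ℂ) + (c - b) = c + k := by ring
    rw [hsum] at h
    rw [h, mul_div_cancel_left₀ _ (Gamma_ne_zero_of_re_pos' hrec)]
  -- the term-by-term identity
  have hterm : ∀ k : ℕ,
      risingC a k * risingC b k / (risingC c k * (k.factorial : ℂ)) * z ^ k
      = Complex.Gamma c / (Complex.Gamma b * Complex.Gamma (c - b))
        * (∫ t in Ioc (0:ℝ) 1, F k t) := by
    intro k
    rw [hval k, hbetaval k, Gamma_add_nat b hb k, Gamma_add_nat c hc k]
    have h1 : Complex.Gamma b ≠ 0 := Gamma_ne_zero_of_re_pos' hb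
    have h2 : Complex.Gamma (c - b) ≠ 0 := Gamma_ne_zero_of_re_pos' hcb
    have h3 : Complex.Gamma c ≠ 0 := Gamma_ne_zero_of_re_pos' hc
    have h4 : risingC c k ≠ 0 := risingC_ne_zero_s9 hc k
    have h5 : ((k.factorial : ℂ)) ≠ 0 := Nat.cast_ne_zero.mpr k.factorial_ne_zero
    rw [binCoeff]
    field_simp
  calc gaussHyper a b c z
      = ∑' k : ℕ, risingC a k * risingC b k / (risingC c k * (k.factorial : ℂ)) * z ^ k := rfl
    _ = ∑' k : ℕ, Complex.Gamma c / (Complex.Gamma b * Complex.Gamma (c - b))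
        * (∫ t in Ioc (0:ℝ) 1, F k t) := tsum_congr hterm
    _ = Complex.Gamma c / (Complex.Gamma b * Complex.Gamma (c - b))
        * ∑' k : ℕ, (∫ t in Ioc (0:ℝ) 1, F k t) := tsum_mul_left
    _ = Complex.Gamma c / (Complex.Gamma b * Complex.Gamma (c - b))
        * ∫ t in Ioc (0:ℝ) 1, ∑' k : ℕ, F k t := by rw [hswap.tsum_eq]
    _ = Complex.Gamma c / (Complex.Gamma b * Complex.Gamma (c - b))
        * ∫ t in Ioc (0:ℝ) 1,
            (t : ℂ) ^ (b - 1) * ((1 : ℂ) - t) ^ (c - b - 1) * ((1 : ℂ) - z * t) ^ (-a) := by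
        rw [setIntegral_congr_fun measurableSet_Ioc hptsum]
    _ = _ := by rw [intervalIntegral.integral_of_le zero_le_one]
end

section
/- With C_{2n} = (2^{2n} n!/(2n)!) b^n and C_{2n+1} = m b^n/(2^n n!), the series y(r) = Σ_{n≥0} C_{2n} r^{2n} + Σ_{n≥0} C_{2n+1} r^{2n+1} satisfies y(r) = 1 + √π · w e^{w²} erf(w) + m r e^{br²/2} with w = √(b/2) r, and in particular y(r) > (1 + m r) e^{br²/2} for r > 0 when m ≥ 0, b > 0... specifically the odd part equals m r e^{br²/2}. -/
/-- The error function `erf x = (2/√π) ∫₀ˣ e^{−t²} dt`. -/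
noncomputable def erf (x : ℝ) : ℝ :=
  (2 / Real.sqrt Real.pi) * ∫ t in (0 : ℝ)..x, Real.exp (-t ^ 2)


open Finset in
lemma pf_sum (n : ℕ) : ∀ a : ℝ, 0 < a →
    ∑ j ∈ range (n+1), (-1:ℝ)^j * (n.choose j) / (a + j)
      = n.factorial / ∏ k ∈ range (n+1), (a + k) := by
  induction n with
  | zero => intro a ha; simp
  | succ n ih =>
    intro a ha
    have hpos : ∀ b : ℝ, 0 < b → (0:ℝ) < ∏ k ∈ range (n+1), (b + k) := by
      intro b hb
      exact Finset.prod_pos (fun k _ => by positivity)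
    have hS : ∑ j ∈ range (n+2), (-1:ℝ)^j * ((n+1).choose j) / (a + j)
        = (∑ j ∈ range (n+2), (-1:ℝ)^j * (n.choose j) / (a + j))
          + ∑ j ∈ range (n+1), (-1:ℝ)^(j+1) * (n.choose j) / (a + (j+1)) := by
      rw [Finset.sum_range_succ' (fun j => (-1:ℝ)^j * ((n+1).choose j) / (a + j)),
          Finset.sum_range_succ' (fun j => (-1:ℝ)^j * (n.choose j) / (a + j))]
      simp only [Nat.choose_succ_succ, Nat.cast_add, mul_add, add_div,
        Finset.sum_add_distrib, Nat.succ_eq_add_one, Nat.choose_zero_right]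
      push_cast
      ring
    have h2 : ∑ j ∈ range (n+2), (-1:ℝ)^j * (n.choose j) / (a + j)
        = ∑ j ∈ range (n+1), (-1:ℝ)^j * (n.choose j) / (a + j) := by
      rw [Finset.sum_range_succ, Nat.choose_succ_self]
      simp
    have h3 : ∑ j ∈ range (n+1), (-1:ℝ)^(j+1) * (n.choose j) / (a + (j+1))
        = - ∑ j ∈ range (n+1), (-1:ℝ)^j * (n.choose j) / ((a+1) + j) := by
      rw [← Finset.sum_neg_distrib]
      refine Finset.sum_congr rfl fun j _ => by push_cast; ring
    rw [hS, h2, h3, ih a ha, ih (a+1) (by linarith)]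
    have hprod : ∏ k ∈ range (n+2), (a + k) = a * ∏ k ∈ range (n+1), ((a+1) + k) := by
      rw [Finset.prod_range_succ' (fun k => (a + (k:ℝ)))]
      simp only [Nat.cast_zero, add_zero, Nat.cast_add, Nat.cast_one]
      rw [mul_comm]
      congr 1
      exact Finset.prod_congr rfl fun k _ => by ring
    have hP1 := hpos a ha
    have hP2 := hpos (a+1) (by linarith)
    rw [hprod]
    have hP12 : ∏ k ∈ range (n+1), ((a+1) + k) = (∏ k ∈ range (n+1), (a + k)) * (a + (n+1)) / a := by
      have e1 : ∏ k ∈ range (n+2), (a + k) = (∏ k ∈ range (n+1), (a + k)) * (a + (n+1)) := by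
        rw [Finset.prod_range_succ]; push_cast; ring_nf
      have h := hprod.symm.trans e1
      field_simp
      linarith [h]
    rw [hP12, Nat.factorial_succ]
    push_cast
    have hne : a + (n+1) > 0 := by positivity
    field_simp
    ring
open Finset in
lemma prod_half (n : ℕ) : ∏ k ∈ range (n+1), ((1:ℝ)/2 + k)
    = (2*n+1).factorial / (2^(2*n+1) * n.factorial) := by
  induction n with
  | zero => norm_num
  | succ n ih =>
    rw [Finset.prod_range_succ, ih]
    have e : (2*(n+1)+1).factorial = (2*n+3)*((2*n+2)*(2*n+1).factorial) := by
      rw [show 2*(n+1)+1 = (2*n+2)+1 from by ring, Nat.factorial_succ,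
        show 2*n+2 = (2*n+1)+1 from by ring, Nat.factorial_succ]

    have e2 : (2:ℝ)^(2*(n+1)+1) = 4 * 2^(2*n+1) := by
      rw [show 2*(n+1)+1 = (2*n+1)+2 from by ring, pow_add]; ring
    rw [e, e2, show (n+1).factorial = (n+1)*n.factorial from Nat.factorial_succ n]
    have hf : (0:ℝ) < (2*n+1).factorial := by positivity
    have hn : (0:ℝ) < n.factorial := by positivity
    push_cast
    field_simp
    ring
open Finset in
lemma key_binom (n : ℕ) :
    ∑ j ∈ range (n+1), (-1:ℝ)^j * (n.choose j) / (2*j+1)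
      = 4^n * n.factorial^2 / (2*n+1).factorial := by
  have h := pf_sum n (1/2) (by norm_num)
  have h2 : ∑ j ∈ range (n+1), (-1:ℝ)^j * (n.choose j) / (2*j+1)
      = (1/2) * ∑ j ∈ range (n+1), (-1:ℝ)^j * (n.choose j) / (1/2 + j) := by
    rw [Finset.mul_sum]
    refine Finset.sum_congr rfl fun j _ => ?_
    have hj : (1:ℝ)/2 + j = (2*j+1)/2 := by ring
    rw [hj, div_div_eq_mul_div]
    ring
  rw [h2, h, prod_half]
  have hf : (0:ℝ) < (2*n+1).factorial := by positivity
  have hn : (0:ℝ) < n.factorial := by positivity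
  rw [show (4:ℝ)^n = 2^(2*n) from by rw [pow_mul]; norm_num,
    show (2:ℝ)^(2*n+1) = 2*2^(2*n) from by rw [pow_add]; ring]
  field_simp

open Finset in
lemma coeff_lem (n : ℕ) :
    ∑ p ∈ Finset.HasAntidiagonal.antidiagonal n,
      (1/(p.1.factorial:ℝ)) * ((-1)^p.2 / (p.2.factorial * (2*p.2+1)))
      = 4^n * n.factorial / (2*n+1).factorial := by
  have h1 : ∑ p ∈ Finset.HasAntidiagonal.antidiagonal n,
      (1/(p.1.factorial:ℝ)) * ((-1)^p.2 / (p.2.factorial * (2*p.2+1)))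
      = ∑ j ∈ range (n+1),
          (1/(((n-j).factorial:ℝ))) * ((-1)^j / (j.factorial * (2*j+1))) := by
    rw [Finset.Nat.sum_antidiagonal_eq_sum_range_succ_mk,
      ← Finset.sum_range_reflect]
    refine Finset.sum_congr rfl fun j hj => ?_
    have hjn : j ≤ n := Nat.lt_succ_iff.mp (Finset.mem_range.mp hj)
    have e : n.succ - 1 - j = n - j := by omega
    rw [e, Nat.sub_sub_self hjn]
  rw [h1]
  have h2 : ∀ j ∈ range (n+1),
      (1/(((n-j).factorial:ℝ))) * ((-1)^j / (j.factorial * (2*j+1)))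
      = ((-1:ℝ)^j * (n.choose j) / (2*j+1)) / n.factorial := by
    intro j hj
    have hjn : j ≤ n := Nat.lt_succ_iff.mp (Finset.mem_range.mp hj)
    have hc : (n.choose j : ℝ) = n.factorial / (j.factorial * (n-j).factorial) := by
      rw [Nat.choose_eq_factorial_div_factorial hjn, Nat.cast_div
        (Nat.factorial_mul_factorial_dvd_factorial hjn) (by positivity)]
      push_cast; rfl
    rw [hc]
    have f1 : ((n-j).factorial:ℝ) ≠ 0 := by positivity
    have f2 : (j.factorial:ℝ) ≠ 0 := by positivity
    have f3 : (n.factorial:ℝ) ≠ 0 := by positivity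
    have f4 : (2*(j:ℝ)+1) ≠ 0 := by positivity
    field_simp
  rw [Finset.sum_congr rfl h2, ← Finset.sum_div, key_binom]
  have hf : ((2*n+1).factorial:ℝ) ≠ 0 := by positivity
  have f3 : (n.factorial:ℝ) ≠ 0 := by positivity
  field_simp

open MeasureTheory

lemma exp_neg_sq_series (s : ℝ) :
    Real.exp (-s^2) = ∑' n : ℕ, (-1:ℝ)^n * s^(2*n) / n.factorial := by
  rw [Real.exp_eq_exp_ℝ, NormedSpace.exp_eq_tsum_div]
  exact tsum_congr fun n => by rw [neg_pow, pow_mul]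

lemma abs_pow_even (t : ℝ) (n : ℕ) : |t ^ (2*n)| = (t^2)^n := by
  rw [pow_mul, abs_pow, abs_pow, sq_abs]

lemma summable_aux (t : ℝ) : Summable (fun n : ℕ => t^(2*n+1) / ((2*n+1) * n.factorial)) := by
  refine Summable.of_norm ?_
  have h := (Real.summable_pow_div_factorial (t^2)).mul_left |t|
  refine h.of_nonneg_of_le (fun n => norm_nonneg _) (fun n => ?_)
  rw [Real.norm_eq_abs, abs_div, abs_of_pos (show (0:ℝ) < (2*n+1) * n.factorial by positivity)]
  have h1 : |t^(2*n+1)| = |t| * (t^2)^n := by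
    rw [pow_succ, abs_mul, abs_pow_even]; ring
  rw [h1, mul_div_assoc]
  refine mul_le_mul_of_nonneg_left ?_ (abs_nonneg t)
  refine div_le_div_of_nonneg_left (by positivity) (by positivity) ?_
  have hf : (1:ℝ) ≤ 2*(n:ℝ)+1 := by have := Nat.cast_nonneg (α := ℝ) n; linarith
  have hfp : (0:ℝ) < n.factorial := by positivity
  nlinarith

lemma summable_aux2 (t : ℝ) : Summable (fun n : ℕ => t^(2*n) / n.factorial) := by
  refine Summable.of_norm ?_
  refine (Real.summable_pow_div_factorial (t^2)).of_nonneg_of_le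
    (fun n => norm_nonneg _) (fun n => ?_)
  rw [Real.norm_eq_abs, abs_div, abs_pow_even,
    abs_of_pos (show (0:ℝ) < (n.factorial:ℝ) by positivity)]

lemma integral_exp_neg_sq_nonneg (t : ℝ) (ht : 0 ≤ t) :
    ∫ s in (0:ℝ)..t, Real.exp (-s^2)
      = ∑' n : ℕ, (-1:ℝ)^n * t^(2*n+1) / ((2*n+1) * n.factorial) := by
  have hint : ∀ n : ℕ, IntegrableOn (fun s : ℝ => (-1:ℝ)^n * s^(2*n) / n.factorial)
      (Set.Ioc 0 t) := by
    intro n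
    exact (Continuous.integrableOn_Ioc (by continuity))
  have hnorm : ∀ (n : ℕ) (s : ℝ), ‖(-1:ℝ)^n * s^(2*n) / n.factorial‖
      = s^(2*n) / n.factorial := by
    intro n s
    rw [Real.norm_eq_abs, abs_div, abs_mul, abs_pow, abs_neg, abs_one, one_pow, one_mul,
      abs_pow_even, pow_mul, abs_of_pos (show (0:ℝ) < (n.factorial:ℝ) by positivity)]
  have hval : ∀ n : ℕ, ∫ s in (0:ℝ)..t, s^(2*n) / n.factorial
      = t^(2*n+1) / ((2*n+1) * n.factorial) := by
    intro n
    rw [intervalIntegral.integral_div, integral_pow]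
    push_cast
    rw [zero_pow (by omega)]
    field_simp
    rw [sub_zero]
  have hsum : Summable fun n : ℕ => ∫ s in Set.Ioc (0:ℝ) t,
      ‖(-1:ℝ)^n * s^(2*n) / n.factorial‖ := by
    have : ∀ n : ℕ, (∫ s in Set.Ioc (0:ℝ) t, ‖(-1:ℝ)^n * s^(2*n) / n.factorial‖)
        = t^(2*n+1) / ((2*n+1) * n.factorial) := by
      intro n
      rw [← intervalIntegral.integral_of_le ht]
      rw [← hval n]
      exact intervalIntegral.integral_congr (fun s _ => hnorm n s)
    rw [funext this]
    exact summable_aux t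
  have key := MeasureTheory.integral_tsum_of_summable_integral_norm
    (F := fun (n : ℕ) (s : ℝ) => (-1:ℝ)^n * s^(2*n) / n.factorial)
    (μ := volume.restrict (Set.Ioc (0:ℝ) t)) (fun n => hint n) hsum
  rw [intervalIntegral.integral_of_le ht]
  have hexp : ∀ s : ℝ, Real.exp (-s^2) = ∑' n : ℕ, (-1:ℝ)^n * s^(2*n) / n.factorial :=
    exp_neg_sq_series
  calc ∫ s in Set.Ioc (0:ℝ) t, Real.exp (-s^2)
      = ∫ s in Set.Ioc (0:ℝ) t, ∑' n : ℕ, (-1:ℝ)^n * s^(2*n) / n.factorial := by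
        exact integral_congr_ae (Filter.Eventually.of_forall (fun s => hexp s))
    _ = ∑' n : ℕ, ∫ s in Set.Ioc (0:ℝ) t, (-1:ℝ)^n * s^(2*n) / n.factorial := key.symm
    _ = ∑' n : ℕ, (-1:ℝ)^n * t^(2*n+1) / ((2*n+1) * n.factorial) := by
        refine tsum_congr fun n => ?_
        rw [← intervalIntegral.integral_of_le ht]
        have : ∀ s : ℝ, (-1:ℝ)^n * s^(2*n) / n.factorial
            = ((-1:ℝ)^n) * (s^(2*n) / n.factorial) := fun s => by ring
        rw [intervalIntegral.integral_congr (fun s _ => this s),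
          intervalIntegral.integral_const_mul, hval n]
        ring

lemma integral_exp_neg_sq (t : ℝ) :
    ∫ s in (0:ℝ)..t, Real.exp (-s^2)
      = ∑' n : ℕ, (-1:ℝ)^n * t^(2*n+1) / ((2*n+1) * n.factorial) := by
  rcases le_or_gt 0 t with ht | ht
  · exact integral_exp_neg_sq_nonneg t ht
  · have hu : (0:ℝ) ≤ -t := by linarith
    have h1 : (∫ s in (0:ℝ)..(-t), Real.exp (-s^2))
        = ∑' n : ℕ, (-1:ℝ)^n * (-t)^(2*n+1) / ((2*n+1) * n.factorial) :=
      integral_exp_neg_sq_nonneg (-t) hu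
    have h2 : (∫ s in (0:ℝ)..(-t), Real.exp (-s^2))
        = - ∫ s in (0:ℝ)..t, Real.exp (-s^2) := by
      have h3 : (∫ s in (0:ℝ)..(-t), Real.exp (-(-s)^2))
          = ∫ s in (-(-t))..(-(0:ℝ)), Real.exp (-s^2) :=
        intervalIntegral.integral_comp_neg (fun s => Real.exp (-s^2))
      simp only [neg_neg, neg_zero] at h3
      rw [show (∫ s in (0:ℝ)..(-t), Real.exp (-s^2))
          = ∫ s in (0:ℝ)..(-t), Real.exp (-(-s)^2) from
        intervalIntegral.integral_congr fun s _ => by rw [neg_sq s], h3,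
        intervalIntegral.integral_symm]
    have h4 : (∫ s in (0:ℝ)..t, Real.exp (-s^2))
        = - ∑' n : ℕ, (-1:ℝ)^n * (-t)^(2*n+1) / ((2*n+1) * n.factorial) := by
      rw [← h1, h2]; ring
    rw [h4, ← tsum_neg]
    refine tsum_congr fun n => ?_
    rw [(odd_two_mul_add_one n).neg_pow]
    ring

lemma exp_sq_series (t : ℝ) : Real.exp (t^2) = ∑' k : ℕ, t^(2*k) / k.factorial := by
  rw [Real.exp_eq_exp_ℝ, NormedSpace.exp_eq_tsum_div]
  exact tsum_congr fun n => by rw [pow_mul]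

lemma summable_norm_f (t : ℝ) : Summable fun k : ℕ => ‖t^(2*k) / (k.factorial:ℝ)‖ := by
  refine (summable_aux2 |t|).congr fun k => ?_
  rw [Real.norm_eq_abs, abs_div, abs_pow_even, abs_of_pos (show (0:ℝ) < (k.factorial:ℝ) by positivity),
    pow_mul, sq_abs]

lemma summable_norm_g (t : ℝ) : Summable fun j : ℕ =>
    ‖(-1:ℝ)^j * t^(2*j+1) / ((2*j+1) * j.factorial)‖ := by
  refine (summable_aux |t|).congr fun j => ?_
  rw [Real.norm_eq_abs, abs_div, abs_mul, abs_pow, abs_neg, abs_one, one_pow, one_mul,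
    abs_of_pos (show (0:ℝ) < (2*(j:ℕ)+1) * (j.factorial:ℝ) by positivity)]
  congr 1
  rw [abs_pow, pow_succ]

lemma cauchy_prod (t : ℝ) :
    Real.exp (t^2) * ∫ s in (0:ℝ)..t, Real.exp (-s^2)
      = ∑' n : ℕ, (4:ℝ)^n * n.factorial / (2*n+1).factorial * t^(2*n+1) := by
  rw [exp_sq_series, integral_exp_neg_sq,
    tsum_mul_tsum_eq_tsum_sum_antidiagonal_of_summable_norm
      (summable_norm_f t) (summable_norm_g t)]
  refine tsum_congr fun n => ?_
  have h1 : ∀ p ∈ Finset.HasAntidiagonal.antidiagonal n,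
      t^(2*p.1) / (p.1.factorial:ℝ) * ((-1:ℝ)^p.2 * t^(2*p.2+1) / ((2*p.2+1) * p.2.factorial))
        = t^(2*n+1) * ((1/(p.1.factorial:ℝ)) * ((-1)^p.2 / (p.2.factorial * (2*p.2+1)))) := by
    intro p hp
    have hpn : p.1 + p.2 = n := Finset.HasAntidiagonal.mem_antidiagonal.mp hp
    have ht : t^(2*p.1) * t^(2*p.2+1) = t^(2*n+1) := by
      rw [← pow_add]; congr 1; omega
    field_simp
    rw [← ht]
  rw [Finset.sum_congr rfl h1, ← Finset.mul_sum, coeff_lem]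
  ring

lemma fact_sq_le (n : ℕ) : (n.factorial * n.factorial : ℝ) ≤ (2*n).factorial := by
  have h : n.factorial * n.factorial ∣ (2*n).factorial := by
    rw [two_mul]
    exact Nat.factorial_mul_factorial_dvd_factorial_add n n
  exact_mod_cast Nat.cast_le.mpr (Nat.le_of_dvd (Nat.factorial_pos _) h)

lemma fact2_le (n : ℕ) : ((2*n).factorial : ℝ) ≤ 2^(2*n) * (n.factorial * n.factorial) := by
  have hch : (2*n).choose n ≤ 2^(2*n) := by
    calc (2*n).choose n ≤ ∑ i ∈ Finset.range (2*n+1), (2*n).choose i :=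
          Finset.single_le_sum (fun i _ => Nat.zero_le _) (Finset.mem_range.mpr (by omega))
      _ = 2^(2*n) := Nat.sum_range_choose (2*n)
  have he : (2*n).choose n * (n.factorial * n.factorial) = (2*n).factorial := by
    have := Nat.choose_mul_factorial_mul_factorial (show n ≤ 2*n by omega)
    rw [show 2*n - n = n from by omega] at this
    rw [← this]; ring
  have : (2*n).factorial ≤ 2^(2*n) * (n.factorial * n.factorial) := by
    rw [← he]
    exact Nat.mul_le_mul_right _ hch
  exact_mod_cast this

lemma summable_even (x : ℝ) :
    Summable fun n : ℕ => ((2:ℝ)^(2*n) * n.factorial / (2*n).factorial) * x^n := by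
  refine Summable.of_norm ?_
  refine (Real.summable_pow_div_factorial (4*|x|)).of_nonneg_of_le
    (fun n => norm_nonneg _) (fun n => ?_)
  rw [Real.norm_eq_abs, abs_mul, abs_pow,
    abs_of_pos (show (0:ℝ) < 2^(2*n) * n.factorial / (2*n).factorial by positivity)]
  have h1 : (2:ℝ)^(2*n) * n.factorial / (2*n).factorial ≤ 2^(2*n) / n.factorial := by
    rw [div_le_div_iff₀ (by positivity) (by positivity)]
    rw [mul_assoc]
    exact mul_le_mul_of_nonneg_left (fact_sq_le n) (by positivity)
  calc (2:ℝ)^(2*n) * n.factorial / (2*n).factorial * |x|^n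
      ≤ 2^(2*n) / n.factorial * |x|^n := by
        exact mul_le_mul_of_nonneg_right h1 (by positivity)
    _ = (4*|x|)^n / n.factorial := by
        rw [mul_pow, show (4:ℝ)^n = 2^(2*n) from by rw [pow_mul]; norm_num]
        ring

lemma main_even (t : ℝ) :
    Real.sqrt Real.pi * t * Real.exp (t^2) * erf t
      = ∑' n : ℕ, (2:ℝ)^(2*n+1) * n.factorial / (2*n+1).factorial * t^(2*n+2) := by
  have hpi : (0:ℝ) < Real.sqrt Real.pi := Real.sqrt_pos.mpr Real.pi_pos
  have h0 : Real.sqrt Real.pi * t * Real.exp (t^2) * erf t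
      = (2*t) * (Real.exp (t^2) * ∫ s in (0:ℝ)..t, Real.exp (-s^2)) := by
    rw [erf]
    field_simp
  rw [h0, cauchy_prod, ← tsum_mul_left]
  refine tsum_congr fun n => ?_
  rw [show (4:ℝ)^n = 2^(2*n) from by rw [pow_mul]; norm_num,
    show (2:ℝ)^(2*n+1) = 2^(2*n)*2 from pow_succ 2 (2*n),
    show t^(2*n+2) = t^(2*n+1)*t from pow_succ t (2*n+1)]
  ring

lemma exp_tsum (x : ℝ) : Real.exp x = ∑' n : ℕ, x^n / n.factorial := by
  rw [Real.exp_eq_exp_ℝ, NormedSpace.exp_eq_tsum_div]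

/-- With `C_{2n} r^{2n} = (2^{2n} n!/(2n)!) (br²/2)^n` and
`C_{2n+1} r^{2n+1} = m r (br²/2)^n/n!`, the series
`y(r) = Σ C_{2n} r^{2n} + Σ C_{2n+1} r^{2n+1}` satisfies
`y(r) = 1 + √π w e^{w²} erf(w) + m r e^{br²/2}` with `w = √(b/2) r`, and
`y(r) > (1 + m r) e^{br²/2}` for `r > 0`; in particular the odd part equals
`m r e^{br²/2}`. -/
theorem series_eq_erf_form (b m r : ℝ) (hb : 0 < b) (hm : 0 ≤ m) :
    (∑' n : ℕ, ((2 : ℝ) ^ (2 * n) * n.factorial / (2 * n).factorial) * (b * r ^ 2 / 2) ^ n)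
        + (∑' n : ℕ, (m * r / n.factorial) * (b * r ^ 2 / 2) ^ n)
      = 1 + Real.sqrt Real.pi * (Real.sqrt (b / 2) * r) *
            Real.exp ((Real.sqrt (b / 2) * r) ^ 2) * erf (Real.sqrt (b / 2) * r)
          + m * r * Real.exp (b * r ^ 2 / 2) ∧
    (∑' n : ℕ, (m * r / n.factorial) * (b * r ^ 2 / 2) ^ n)
      = m * r * Real.exp (b * r ^ 2 / 2) ∧
    (0 < r →
      (∑' n : ℕ, ((2 : ℝ) ^ (2 * n) * n.factorial / (2 * n).factorial) * (b * r ^ 2 / 2) ^ n)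
          + (∑' n : ℕ, (m * r / n.factorial) * (b * r ^ 2 / 2) ^ n)
        > (1 + m * r) * Real.exp (b * r ^ 2 / 2)) := by
  set x : ℝ := b * r ^ 2 / 2 with hx
  set t : ℝ := Real.sqrt (b / 2) * r with htdef
  have ht2 : t ^ 2 = x := by
    rw [htdef, mul_pow, Real.sq_sqrt (by positivity : (0:ℝ) ≤ b / 2)]
    rw [hx]; ring
  -- odd part
  have hodd : (∑' n : ℕ, (m * r / n.factorial) * x ^ n) = m * r * Real.exp x := by
    have h1 : ∀ n : ℕ, (m * r / n.factorial) * x ^ n = (m*r) * (x^n / n.factorial) :=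
      fun n => by ring
    rw [tsum_congr h1, tsum_mul_left, ← exp_tsum]
  -- even part
  have heven : (∑' n : ℕ, ((2 : ℝ) ^ (2 * n) * n.factorial / (2 * n).factorial) * x ^ n)
      = 1 + Real.sqrt Real.pi * t * Real.exp (t^2) * erf t := by
    rw [Summable.tsum_eq_zero_add (summable_even x)]
    have h0 : ((2:ℝ)^(2*0) * (Nat.factorial 0) / (2*0).factorial) * x^0 = 1 := by norm_num
    rw [h0, main_even]
    congr 1
    refine tsum_congr fun n => ?_
    have e1 : ((2*(n+1)).factorial : ℝ) = (2*n+2) * (2*n+1).factorial := by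
      rw [show 2*(n+1) = (2*n+1)+1 from by ring, Nat.factorial_succ]
      push_cast; ring
    have e2 : ((n+1).factorial : ℝ) = (n+1) * n.factorial := by
      rw [Nat.factorial_succ]; push_cast; try ring
    have e3 : x^(n+1) = t^(2*n+2) := by
      rw [← ht2, ← pow_mul, show 2*(n+1) = 2*n+2 from by ring]
    rw [e1, e2, e3]
    have h4 : (2:ℝ)^(2*(n+1)) = 2 * 2^(2*n+1) := by
      rw [show 2*(n+1) = (2*n+1)+1 from by ring, pow_succ]; ring
    rw [h4]
    have hf : ((2*n+1).factorial : ℝ) ≠ 0 := by positivity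
    field_simp
  have hmain : (∑' n : ℕ, ((2 : ℝ) ^ (2 * n) * n.factorial / (2 * n).factorial) * x ^ n)
        + (∑' n : ℕ, (m * r / n.factorial) * x ^ n)
      = 1 + Real.sqrt Real.pi * t * Real.exp (t^2) * erf t + m * r * Real.exp x := by
    rw [heven, hodd]
  refine ⟨hmain, hodd, fun hr => ?_⟩
  -- inequality
  have hxpos : 0 < x := by rw [hx]; positivity
  have hlt : Real.exp x
      < ∑' n : ℕ, ((2 : ℝ) ^ (2 * n) * n.factorial / (2 * n).factorial) * x ^ n := by
    rw [exp_tsum x]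
    refine Summable.tsum_lt_tsum_of_nonneg (i := 1) (fun n => by positivity) (fun n => ?_) ?_ (summable_even x)
    · -- x^n/n! ≤ c_n x^n
      have hc : (1:ℝ) / n.factorial ≤ (2:ℝ)^(2*n) * n.factorial / (2*n).factorial := by
        rw [div_le_div_iff₀ (by positivity) (by positivity)]
        calc (1:ℝ) * (2*n).factorial = (2*n).factorial := by ring
          _ ≤ 2^(2*n) * (n.factorial * n.factorial) := fact2_le n
          _ = 2^(2*n) * n.factorial * n.factorial := by ring
      calc x^n / n.factorial = (1/n.factorial) * x^n := by ring
        _ ≤ ((2:ℝ)^(2*n) * n.factorial / (2*n).factorial) * x^n :=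
            mul_le_mul_of_nonneg_right hc (by positivity)
    · -- strict at n = 1
      show x^1 / (Nat.factorial 1) < ((2:ℝ)^(2*1) * (Nat.factorial 1) / (2*1).factorial) * x^1
      norm_num [Nat.factorial]
      linarith
  have hexp : Real.exp (t^2) = Real.exp x := by rw [ht2]
  have herf : 0 ≤ Real.sqrt Real.pi * t * Real.exp (t^2) * erf t := by
    have := main_even t
    rw [this]
    refine tsum_nonneg fun n => ?_
    have : t^(2*n+2) = (t^2)^(n+1) := by rw [← pow_mul, show 2*(n+1) = 2*n+2 from by ring]
    rw [this]
    positivity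
  calc (1 + m*r) * Real.exp x = Real.exp x + m * r * Real.exp x := by ring
    _ < (∑' n : ℕ, ((2 : ℝ) ^ (2 * n) * n.factorial / (2 * n).factorial) * x ^ n)
          + m * r * Real.exp x := by linarith
    _ = _ := by rw [hodd]
end
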